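/- Let (q_k)_{k≥1} and α_{k,i} be as in the four-species coefficient setup, and define c_i := α_{i+1,i}/(i+1) for i ≥ 1. Then c₁ = 1/4, c₂ = 1/6, c₃ = −1/12, and the sequence satisfies the homogeneous linear recursion c_i = c_{i−1} − c_{i−2} + (1/3)·c_{i−3} for all i ≥ 4. -/

import Mathlib

open MeasureTheory Polynomial

noncomputable section BS4


variable {K : Type*} [Field K]

/-- Antiderivative of a polynomial with constant term 0. -/
def intP (p : K[X]) : K[X] := p.sum fun n a => C (a / (n + 1)) * X ^ (n + 1)

lemma intP_coeff_succ (p : K[X]) (n : ℕ) :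
    (intP p).coeff (n + 1) = p.coeff n / ((n : K) + 1) := by
  rw [intP, Polynomial.sum, finset_sum_coeff]
  simp only [coeff_C_mul, coeff_X_pow]
  rw [Finset.sum_eq_single n]
  · simp
  · intro b _ hb
    rw [if_neg, mul_zero]
    intro h; exact hb (Nat.succ_injective h.symm)
  · intro hn
    simp [Polynomial.notMem_support_iff.mp hn]

lemma intP_coeff_zero (p : K[X]) : (intP p).coeff 0 = 0 := by
  rw [intP, Polynomial.sum, finset_sum_coeff]
  simp [coeff_C_mul, coeff_X_pow]

lemma intP_eval_zero (p : K[X]) : (intP p).eval 0 = 0 := by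
  rw [← Polynomial.coeff_zero_eq_eval_zero, intP_coeff_zero]

lemma derivative_intP [CharZero K] (p : K[X]) : derivative (intP p) = p := by
  rw [intP]
  conv_rhs => rw [← Polynomial.sum_C_mul_X_pow_eq p]
  rw [Polynomial.sum, Polynomial.sum, map_sum]
  refine Finset.sum_congr rfl fun n _ => ?_
  rw [derivative_C_mul, derivative_X_pow]
  rw [Nat.add_sub_cancel, ← mul_assoc, ← map_mul]
  congr 2
  push_cast
  rw [div_mul_cancel₀]
  exact Nat.cast_add_one_ne_zero n

lemma intP_uniq [CharZero K] {A B : K[X]} (h1 : derivative B = A) (h0 : B.coeff 0 = 0) :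
    intP A = B := by
  have hd : derivative (intP A - B) = 0 := by
    rw [derivative_sub, derivative_intP, h1, sub_self]
  have := Polynomial.eq_C_of_derivative_eq_zero hd
  have hc : (intP A - B).coeff 0 = 0 := by
    rw [coeff_sub, intP_coeff_zero, h0, sub_self]
  rw [hc, map_zero, sub_eq_zero] at this
  exact this

lemma intP_add (p q : K[X]) : intP (p + q) = intP p + intP q := by
  ext n
  cases n with
  | zero => simp [intP_coeff_zero]
  | succ n => simp [intP_coeff_succ, coeff_add, add_div]

lemma intP_C_mul (a : K) (p : K[X]) : intP (C a * p) = C a * intP p := by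
  ext n
  cases n with
  | zero => simp [intP_coeff_zero]
  | succ n => simp [intP_coeff_succ, coeff_C_mul, mul_div_assoc]

lemma intP_map {L : Type*} [Field L] (f : K →+* L) (p : K[X]) :
    (intP p).map f = intP (p.map f) := by
  ext n
  cases n with
  | zero => simp [coeff_map, intP_coeff_zero]
  | succ n =>
    rw [coeff_map, intP_coeff_succ, intP_coeff_succ, coeff_map, map_div₀]
    congr 1
    push_cast
    simp


/-- The integral functional `∫₀¹ p`. -/
def Sv (p : K[X]) : K := (intP p).eval 1

def Vp : K[X] := intP (1 - X)

def Rp (p : K[X]) : K[X] := intP ((1 - X) * p + C (Sv p) - intP p)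

/-- The polynomial transfer operator of the four-species recursion. -/
def TT (p : K[X]) : K[X] :=
  p * intP Vp + intP (p * Vp + Rp p) + (p * Vp + Rp p) * (1 - X)
    + Vp * (C (Sv p) - intP p)

variable [CharZero K]

lemma Vp_eq : (Vp : K[X]) = X - C (1/2 : K) * X ^ 2 := by
  refine intP_uniq ?_ (by simp)
  rw [derivative_sub, derivative_C_mul, derivative_X_pow, derivative_X]
  norm_num [← mul_assoc, ← map_mul]

lemma Wp_eq : intP (Vp : K[X]) = C (1/2 : K) * X ^ 2 - C (1/6 : K) * X ^ 3 := by
  rw [Vp_eq]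
  refine intP_uniq ?_ (by simp)
  rw [derivative_sub, derivative_C_mul, derivative_C_mul, derivative_X_pow, derivative_X_pow]
  norm_num [← mul_assoc, ← map_mul]

lemma intP_one : intP (1 : K[X]) = X := intP_uniq (by simp) (by simp)

lemma intP_derivative (T : K[X]) : intP (derivative T) = T - C (T.coeff 0) :=
  intP_uniq (by simp) (by simp)

lemma Sv_derivative (T : K[X]) : Sv (derivative T) = T.eval 1 - T.eval 0 := by
  rw [Sv, intP_derivative]
  simp [coeff_zero_eq_eval_zero]

lemma Sv_add (p q : K[X]) : Sv (p + q) = Sv p + Sv q := by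
  rw [Sv, Sv, Sv, intP_add, eval_add]

lemma Sv_C_mul (a : K) (p : K[X]) : Sv (C a * p) = a * Sv p := by
  rw [Sv, Sv, intP_C_mul, eval_mul, eval_C]

lemma Sv_neg (p : K[X]) : Sv (-p) = - Sv p := by
  have := Sv_C_mul (-1 : K) p
  simpa using this

lemma Sv_sub (p q : K[X]) : Sv (p - q) = Sv p - Sv q := by
  rw [sub_eq_add_neg, Sv_add, Sv_neg, sub_eq_add_neg]

lemma Sv_C (a : K) : Sv (C a : K[X]) = a := by
  have : (C a : K[X]) = C a * 1 := by ring
  rw [this, Sv_C_mul, Sv, intP_one]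
  simp

lemma Sv_ibp (U Z : K[X]) :
    Sv (derivative U * Z) = (U * Z).eval 1 - (U * Z).eval 0 - Sv (U * derivative Z) := by
  have h := Sv_derivative (U * Z)
  rw [derivative_mul, Sv_add] at h
  linear_combination h

lemma Sv_intP (A : K[X]) : Sv (intP A) = Sv ((1 - X) * A) := by
  have h := Sv_ibp (X - 1 : K[X]) (intP A)
  rw [derivative_intP] at h
  simp only [derivative_sub, derivative_X, derivative_one, sub_zero, one_mul] at h
  rw [h]
  have e1 : ((X - 1 : K[X]) * intP A).eval 1 = 0 := by simp
  have e0 : ((X - 1 : K[X]) * intP A).eval 0 = 0 := by simp [intP_eval_zero]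
  rw [e1, e0]
  have : ((1 : K[X]) - X) * A = -((X - 1) * A) := by ring
  rw [this, Sv_neg]
  ring

lemma Vp_eval_one : (Vp : K[X]).eval 1 = 1/2 := by rw [Vp_eq]; simp; norm_num

lemma Wp_eval_one : (intP (Vp : K[X])).eval 1 = 1/3 := by rw [Wp_eq]; simp; norm_num

lemma Sv_Vp : Sv (Vp : K[X]) = 1/3 := by rw [Sv, Wp_eval_one]

lemma Vp_eval_zero : (Vp : K[X]).eval 0 = 0 := intP_eval_zero _

lemma derivative_Vp : derivative (Vp : K[X]) = 1 - X := derivative_intP _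

/-- The key invariance: `∫₀¹ TT p = ∫₀¹ p`. -/
lemma Sv_TT (p : K[X]) : Sv (TT p) = Sv p := by
  set S₀ := Sv p with hS₀
  set iP := intP p with hiP
  set B : K[X] := (1 - X) * p + C S₀ - iP with hB
  set R : K[X] := intP B with hR
  have hRp : Rp p = R := rfl
  -- basic evaluations
  have hSB : Sv B = S₀ := by
    rw [hB, Sv_sub, Sv_add, Sv_C, hiP, Sv_intP]
    ring
  have hReval1 : R.eval 1 = S₀ := by rw [hR, ← Sv, hSB]
  have hSiPVp : Sv (p * intP Vp) = S₀ * (1/3) - Sv (Vp * iP) := by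
    have h := Sv_ibp iP (intP Vp)
    rw [hiP, derivative_intP p, derivative_intP (Vp : K[X])] at h
    have e0 : (intP p * intP (Vp : K[X])).eval 0 = 0 := by
      simp [intP_eval_zero]
    have e1 : (intP p * intP (Vp : K[X])).eval 1 = S₀ * (1/3) := by
      rw [eval_mul, Wp_eval_one, ← Sv]
    rw [e0, e1, sub_zero, ← hiP, mul_comm iP (Vp : K[X])] at h
    rw [h]
  have hSVpB : Sv ((1 - X) * R) = (1/2) * S₀ - Sv (Vp * B) := by
    have h := Sv_ibp (Vp : K[X]) R
    rw [derivative_Vp, hR, derivative_intP B] at h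
    have e0 : ((Vp : K[X]) * R).eval 0 = 0 := by simp [Vp_eval_zero]
    have e1 : ((Vp : K[X]) * R).eval 1 = (1/2) * S₀ := by
      rw [eval_mul, Vp_eval_one, hReval1]
    rw [e0, e1, sub_zero, ← hR] at h
    exact h
  have hSvVpB : Sv (Vp * B) = Sv ((1 - X) * (Vp * p)) + S₀ * (1/3) - Sv (Vp * iP) := by
    have : (Vp : K[X]) * B = (1 - X) * (Vp * p) + C S₀ * Vp - Vp * iP := by
      rw [hB]; ring
    rw [this, Sv_sub, Sv_add, Sv_C_mul, Sv_Vp]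
  have hD : p * Vp + Rp p = Vp * p + R := by rw [hRp]; ring
  -- main computation
  rw [TT, Sv_add, Sv_add, Sv_add, hD]
  have h2 : Sv (intP ((Vp : K[X]) * p + R)) = Sv ((1 - X) * (Vp * p)) + Sv ((1 - X) * R) := by
    rw [Sv_intP]
    have : ((1 : K[X]) - X) * (Vp * p + R) = (1 - X) * (Vp * p) + (1 - X) * R := by ring
    rw [this, Sv_add]
  have h3 : Sv (((Vp : K[X]) * p + R) * (1 - X))
      = Sv ((1 - X) * (Vp * p)) + Sv ((1 - X) * R) := by
    have : ((Vp : K[X]) * p + R) * (1 - X) = (1 - X) * (Vp * p) + (1 - X) * R := by ring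
    rw [this, Sv_add]
  have h4 : Sv ((Vp : K[X]) * (C S₀ - iP)) = S₀ * (1/3) - Sv (Vp * iP) := by
    have : (Vp : K[X]) * (C S₀ - iP) = C S₀ * Vp - Vp * iP := by ring
    rw [this, Sv_sub, Sv_C_mul, Sv_Vp]
  rw [h2, h3, h4, hSiPVp, hSVpB, hSvVpB]
  ring

-- ### Coefficient extraction (over ℚ)

lemma tool2 (p : ℚ[X]) (c : ℚ) (k d n : ℕ) (h : d = n + k) :
    (p * (C c * X ^ k)).coeff d = c * p.coeff n := by
  subst h
  rw [show p * (C c * X ^ k) = C c * (p * X ^ k) by ring, coeff_C_mul, coeff_mul_X_pow]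

lemma tool0 (p : ℚ[X]) (c : ℚ) (k d : ℕ) (h : d < k) :
    (p * (C c * X ^ k)).coeff d = 0 := by
  rw [show p * (C c * X ^ k) = C c * (p * X ^ k) by ring, coeff_C_mul,
    coeff_mul_X_pow', if_neg (by omega)]
  ring

lemma toolX (p : ℚ[X]) (d n : ℕ) (h : d = n + 1) : (p * X).coeff d = p.coeff n := by
  subst h; exact coeff_mul_X p n

lemma intP_coeff' (p : ℚ[X]) (d n : ℕ) (h : d = n + 1) :
    (intP p).coeff d = p.coeff n / ((n : ℚ) + 1) := by
  subst h; exact intP_coeff_succ p n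

lemma E_coeff' (p : ℚ[X]) (d n : ℕ) (h : d = n + 1) :
    ((C (Sv p) - intP p) : ℚ[X]).coeff d = -(p.coeff n / ((n : ℚ) + 1)) := by
  subst h
  rw [coeff_sub, intP_coeff_succ, coeff_C, if_neg (Nat.succ_ne_zero n)]
  ring

lemma E_coeff_zero (p : ℚ[X]) : ((C (Sv p) - intP p) : ℚ[X]).coeff 0 = Sv p := by
  rw [coeff_sub, intP_coeff_zero, coeff_C, if_pos rfl, sub_zero]

lemma B_coeff' (p : ℚ[X]) (d n : ℕ) (h : d = n + 1) :
    (((1 - X) * p + C (Sv p) - intP p) : ℚ[X]).coeff d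
      = p.coeff (n + 1) - p.coeff n - p.coeff n / ((n : ℚ) + 1) := by
  subst h
  rw [coeff_sub, coeff_add, intP_coeff_succ, coeff_C, if_neg (Nat.succ_ne_zero n),
    show ((1 : ℚ[X]) - X) * p = p - p * X by ring, coeff_sub, coeff_mul_X]
  ring

lemma B_coeff_zero (p : ℚ[X]) :
    (((1 - X) * p + C (Sv p) - intP p) : ℚ[X]).coeff 0 = p.coeff 0 + Sv p := by
  rw [coeff_sub, coeff_add, intP_coeff_zero, coeff_C, if_pos rfl,
    show ((1 : ℚ[X]) - X) * p = p - p * X by ring, coeff_sub]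
  simp

lemma splitV (p : ℚ[X]) : p * Vp = p * (C (1:ℚ) * X ^ 1) - p * (C (1/2 : ℚ) * X ^ 2) := by
  rw [Vp_eq, map_one]; ring

lemma D_coeff_zero (p : ℚ[X]) : ((p * Vp + Rp p) : ℚ[X]).coeff 0 = 0 := by
  rw [coeff_add, Rp, intP_coeff_zero, splitV, coeff_sub,
    tool0 p 1 1 0 (by omega), tool0 p (1/2) 2 0 (by omega)]
  ring

lemma D_coeff_one (p : ℚ[X]) :
    ((p * Vp + Rp p) : ℚ[X]).coeff 1 = 2 * p.coeff 0 + Sv p := by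
  rw [coeff_add, Rp, intP_coeff' _ 1 0 rfl, B_coeff_zero, splitV, coeff_sub,
    tool2 p 1 1 1 0 rfl, tool0 p (1/2) 2 1 (by omega)]
  norm_num
  ring

lemma D_coeff' (p : ℚ[X]) (d n : ℕ) (h : d = n + 2) :
    ((p * Vp + Rp p) : ℚ[X]).coeff d
      = p.coeff (n + 1) - (1/2) * p.coeff n
        + (p.coeff (n + 1) - p.coeff n - p.coeff n / ((n : ℚ) + 1)) / ((n : ℚ) + 2) := by
  rw [coeff_add, Rp, intP_coeff' _ d (n + 1) (by omega), B_coeff' p (n + 1) n rfl,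
    splitV, coeff_sub, tool2 p 1 1 d (n + 1) (by omega), tool2 p (1/2) 2 d n h]
  push_cast
  ring

lemma TT_split (p : ℚ[X]) (d : ℕ) :
    (TT p).coeff d
      = (p * intP Vp).coeff d + (intP (p * Vp + Rp p)).coeff d
        + ((p * Vp + Rp p) * (1 - X)).coeff d
        + (Vp * (C (Sv p) - intP p)).coeff d := by
  rw [TT, coeff_add, coeff_add, coeff_add]

lemma splitW (p : ℚ[X]) :
    p * intP Vp = p * (C (1/2 : ℚ) * X ^ 2) - p * (C (1/6 : ℚ) * X ^ 3) := by
  rw [Wp_eq]; ring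

lemma splitVE (p : ℚ[X]) :
    (Vp : ℚ[X]) * (C (Sv p) - intP p)
      = (C (Sv p) - intP p) * (C (1:ℚ) * X ^ 1) - (C (Sv p) - intP p) * (C (1/2 : ℚ) * X ^ 2) := by
  rw [Vp_eq, map_one]; ring

lemma split1X (r : ℚ[X]) : r * (1 - X) = r - r * X := by ring

lemma coeff_TT_one (p : ℚ[X]) : (TT p).coeff 1 = 2 * p.coeff 0 + 2 * Sv p := by
  rw [TT_split, splitW, coeff_sub, tool0 p (1/2) 2 1 (by omega), tool0 p (1/6) 3 1 (by omega),
    intP_coeff' _ 1 0 rfl, D_coeff_zero, split1X, coeff_sub, D_coeff_one,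
    toolX _ 1 0 rfl, D_coeff_zero, splitVE, coeff_sub,
    tool2 _ 1 1 1 0 rfl, tool0 _ (1/2) 2 1 (by omega), E_coeff_zero]
  norm_num
  ring

lemma coeff_TT_two (p : ℚ[X]) :
    (TT p).coeff 2 = (3/2) * p.coeff 1 - 3 * p.coeff 0 - Sv p := by
  rw [TT_split, splitW, coeff_sub, tool2 p (1/2) 2 2 0 rfl, tool0 p (1/6) 3 2 (by omega),
    intP_coeff' _ 2 1 rfl, D_coeff_one, split1X, coeff_sub, D_coeff' p 2 0 rfl,
    toolX _ 2 1 rfl, D_coeff_one, splitVE, coeff_sub,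
    tool2 _ 1 1 2 1 rfl, tool2 _ (1/2) 2 2 0 rfl, E_coeff' p 1 0 rfl, E_coeff_zero]
  norm_num
  ring

lemma coeff_TT_three (p : ℚ[X]) :
    (TT p).coeff 3 = (4/3) * p.coeff 2 - 2 * p.coeff 1 + (4/3) * p.coeff 0 := by
  rw [TT_split, splitW, coeff_sub, tool2 p (1/2) 2 3 1 rfl, tool2 p (1/6) 3 3 0 rfl,
    intP_coeff' _ 3 2 rfl, D_coeff' p 2 0 rfl, split1X, coeff_sub, D_coeff' p 3 1 rfl,
    toolX _ 3 2 rfl, D_coeff' p 2 0 rfl, splitVE, coeff_sub,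
    tool2 _ 1 1 3 2 rfl, tool2 _ (1/2) 2 3 1 rfl, E_coeff' p 2 1 rfl, E_coeff' p 1 0 rfl]
  norm_num
  ring

lemma coeff_TT_ge4 (p : ℚ[X]) (m : ℕ) :
    (TT p).coeff (m + 4)
      = p.coeff (m + 3) - p.coeff (m + 2) + p.coeff (m + 1) / 3
        + (p.coeff (m + 3) - 2 * p.coeff (m + 2) + p.coeff (m + 1)) / ((m : ℚ) + 4)
        - 2 * p.coeff (m + 2) / (((m : ℚ) + 4) * ((m : ℚ) + 3))
        + 2 * p.coeff (m + 1) / (((m : ℚ) + 4) * ((m : ℚ) + 2)) := by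
  rw [TT_split, splitW, coeff_sub, tool2 p (1/2) 2 (m+4) (m+2) (by omega),
    tool2 p (1/6) 3 (m+4) (m+1) (by omega),
    intP_coeff' _ (m+4) (m+3) (by omega), D_coeff' p (m+3) (m+1) (by omega),
    split1X, coeff_sub, D_coeff' p (m+4) (m+2) (by omega),
    toolX _ (m+4) (m+3) (by omega), D_coeff' p (m+3) (m+1) (by omega), splitVE, coeff_sub,
    tool2 _ 1 1 (m+4) (m+3) (by omega), tool2 _ (1/2) 2 (m+4) (m+2) (by omega),
    E_coeff' p (m+3) (m+2) (by omega), E_coeff' p (m+2) (m+1) (by omega)]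
  have h1 : ((m : ℚ) + 1) ≠ 0 := by positivity
  have h2 : ((m : ℚ) + 2) ≠ 0 := by positivity
  have h3 : ((m : ℚ) + 3) ≠ 0 := by positivity
  have h4 : ((m : ℚ) + 4) ≠ 0 := by positivity
  have h2' : ((m : ℚ) + 1 + 1) ≠ 0 := by positivity
  have h3' : ((m : ℚ) + 2 + 1) ≠ 0 := by positivity
  have h4' : ((m : ℚ) + 3 + 1) ≠ 0 := by positivity
  push_cast
  field_simp
  ring

lemma coeff_TT_zero (p : ℚ[X]) : (TT p).coeff 0 = 0 := by
  rw [TT_split, splitW, coeff_sub, tool0 p (1/2) 2 0 (by omega), tool0 p (1/6) 3 0 (by omega),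
    intP_coeff_zero, split1X, coeff_sub, D_coeff_zero, splitVE, coeff_sub,
    tool0 _ 1 1 0 (by omega), tool0 _ (1/2) 2 0 (by omega)]
  simp

-- ### Analysis: the triple integral equals `eval x (TT P)`

open MeasureTheory intervalIntegral

lemma pftc (P : ℝ[X]) (a b : ℝ) :
    ∫ t in a..b, P.eval t = (intP P).eval b - (intP P).eval a := by
  exact intervalIntegral.integral_eq_sub_of_hasDerivAt
    (f := fun y => (intP P).eval y)
    (fun t _ => by simpa [derivative_intP] using (intP P).hasDerivAt t)
    ((P.continuous).intervalIntegrable a b)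

lemma ae_ne_volume (c : ℝ) : ∀ᵐ (t : ℝ), t ≠ c := by
  rw [MeasureTheory.ae_iff]
  simpa using Real.volume_singleton

lemma indic_int (f : ℝ → ℝ) (hf : Continuous f) (a b : ℝ) (c : ℝ) :
    IntervalIntegrable (Set.indicator {x | x ≤ c} f) volume a b :=
  intervalIntegrable_iff.mpr
    (((intervalIntegrable_iff.mp (hf.intervalIntegrable a b))).indicator measurableSet_Iic)

lemma indicLT (c : ℝ) (hc : c ∈ Set.Icc (0:ℝ) 1) (f : ℝ → ℝ) :
    (∫ t in (0:ℝ)..1, if t < c then f t else 0) = ∫ t in (0:ℝ)..c, f t := by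
  rw [← intervalIntegral.integral_indicator hc]
  refine intervalIntegral.integral_congr_ae ?_
  filter_upwards [ae_ne_volume c] with t ht _
  by_cases h' : t < c
  · rw [if_pos h', Set.indicator_of_mem (by exact h'.le)]
  · rw [if_neg h', Set.indicator_of_notMem]
    simpa using lt_of_le_of_ne (not_lt.mp h') (Ne.symm ht)

lemma indicGT (c : ℝ) (hc : c ∈ Set.Icc (0:ℝ) 1) (f : ℝ → ℝ) (hf : Continuous f) :
    (∫ t in (0:ℝ)..1, if c < t then f t else 0) = ∫ t in c..1, f t := by
  have key : ∀ t : ℝ, (if c < t then f t else 0) = f t - Set.indicator {x | x ≤ c} f t := by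
    intro t
    by_cases h : c < t
    · rw [if_pos h, Set.indicator_of_notMem (by simpa using h), sub_zero]
    · rw [if_neg h, Set.indicator_of_mem (by simpa using not_lt.mp h), sub_self]
  simp only [key]
  rw [intervalIntegral.integral_sub (hf.intervalIntegrable 0 1) (indic_int f hf 0 1 c),
    intervalIntegral.integral_indicator hc]
  exact intervalIntegral.integral_interval_sub_left (hf.intervalIntegrable 0 1)
    (hf.intervalIntegrable 0 c)

lemma triple_integral_eq (P : ℝ[X]) (x : ℝ) (hx : x ∈ Set.Icc (0:ℝ) 1) :
    (∫ ξ₁ in (0:ℝ)..1, ∫ ξ₂ in (0:ℝ)..1, ∫ ξ₃ in (0:ℝ)..1,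
        if ξ₂ < min ξ₁ (min ξ₃ x) then
          P.eval x + P.eval ξ₁ + P.eval ξ₂ + P.eval ξ₃ else 0)
      = (TT P).eval x := by
  have hPc : Continuous fun t : ℝ => P.eval t := P.continuous
  -- Step 1 : the innermost integral
  have inner : ∀ ξ₁ : ℝ, ∀ ξ₂ ∈ Set.Icc (0:ℝ) 1,
      (∫ ξ₃ in (0:ℝ)..1, if ξ₂ < min ξ₁ (min ξ₃ x) then
          P.eval x + P.eval ξ₁ + P.eval ξ₂ + P.eval ξ₃ else 0)
        = if ξ₂ < min ξ₁ x then
            (P.eval x + P.eval ξ₁ + P.eval ξ₂) * (1 - ξ₂)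
              + ((intP P).eval 1 - (intP P).eval ξ₂) else 0 := by
    intro ξ₁ ξ₂ hξ₂
    by_cases h : ξ₂ < min ξ₁ x
    · have h1 : ξ₂ < ξ₁ := h.trans_le (min_le_left _ _)
      have h2 : ξ₂ < x := h.trans_le (min_le_right _ _)
      have e : ∀ ξ₃ : ℝ, (if ξ₂ < min ξ₁ (min ξ₃ x) then
            P.eval x + P.eval ξ₁ + P.eval ξ₂ + P.eval ξ₃ else 0)
          = if ξ₂ < ξ₃ then (P.eval x + P.eval ξ₁ + P.eval ξ₂) + P.eval ξ₃ else 0 := by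
        intro ξ₃
        by_cases hc : ξ₂ < ξ₃
        · rw [if_pos (lt_min h1 (lt_min hc h2)), if_pos hc]
        · rw [if_neg (fun hlt => hc (lt_min_iff.mp (lt_min_iff.mp hlt).2).1), if_neg hc]
      rw [intervalIntegral.integral_congr (fun ξ₃ _ => e ξ₃), if_pos h,
        indicGT ξ₂ hξ₂ (fun t => (P.eval x + P.eval ξ₁ + P.eval ξ₂) + P.eval t) (continuous_const.add hPc),
        intervalIntegral.integral_add (continuous_const.intervalIntegrable _ _)
          (hPc.intervalIntegrable _ _),
        intervalIntegral.integral_const, pftc]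
      simp only [smul_eq_mul]
      ring
    · have e : ∀ ξ₃ : ℝ, (if ξ₂ < min ξ₁ (min ξ₃ x) then
            P.eval x + P.eval ξ₁ + P.eval ξ₂ + P.eval ξ₃ else 0) = 0 := by
        intro ξ₃
        rw [if_neg]
        intro hlt
        exact h (lt_min (hlt.trans_le (min_le_left _ _))
          ((hlt.trans_le (min_le_right _ _)).trans_le (min_le_right _ _)))
      rw [intervalIntegral.integral_congr (fun ξ₃ _ => e ξ₃), if_neg h]
      simp
  -- Step 2 : the middle integral
  have middle : ∀ ξ₁ ∈ Set.Icc (0:ℝ) 1,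
      (∫ ξ₂ in (0:ℝ)..1, ∫ ξ₃ in (0:ℝ)..1, if ξ₂ < min ξ₁ (min ξ₃ x) then
          P.eval x + P.eval ξ₁ + P.eval ξ₂ + P.eval ξ₃ else 0)
        = (P.eval x + P.eval ξ₁) * (Vp : ℝ[X]).eval (min ξ₁ x)
            + (Rp P).eval (min ξ₁ x) := by
    intro ξ₁ hξ₁
    have hm : min ξ₁ x ∈ Set.Icc (0:ℝ) 1 :=
      ⟨le_min hξ₁.1 hx.1, (min_le_left _ _).trans hξ₁.2⟩
    have huIcc : Set.uIcc (0:ℝ) 1 = Set.Icc 0 1 := Set.uIcc_of_le (by norm_num)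
    rw [intervalIntegral.integral_congr (g := fun ξ₂ =>
        if ξ₂ < min ξ₁ x then (P.eval x + P.eval ξ₁ + P.eval ξ₂) * (1 - ξ₂)
          + ((intP P).eval 1 - (intP P).eval ξ₂) else 0)
        (by rw [huIcc]; exact fun ξ₂ hξ₂ => inner ξ₁ ξ₂ hξ₂),
      indicLT _ hm _]
    have e : ∀ t : ℝ, (P.eval x + P.eval ξ₁ + P.eval t) * (1 - t)
          + ((intP P).eval 1 - (intP P).eval t)
        = (C (P.eval x + P.eval ξ₁) * (1 - X)
            + ((1 - X) * P + C (Sv P) - intP P)).eval t := by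
      intro t
      simp only [eval_add, eval_sub, eval_mul, eval_C, eval_X, eval_one, Sv]
      ring
    rw [intervalIntegral.integral_congr (fun t _ => e t), pftc,
      intP_eval_zero, sub_zero, intP_add, intP_C_mul]
    have : intP ((1 - X) * P + C (Sv P) - intP P) = Rp P := rfl
    rw [this]
    simp only [eval_add, eval_mul, eval_C]
    rfl
  -- Step 3 : the outer integral
  have huIcc : Set.uIcc (0:ℝ) 1 = Set.Icc 0 1 := Set.uIcc_of_le (by norm_num)
  rw [intervalIntegral.integral_congr (g := fun ξ₁ =>
      (P.eval x + P.eval ξ₁) * (Vp : ℝ[X]).eval (min ξ₁ x) + (Rp P).eval (min ξ₁ x))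
      (by rw [huIcc]; exact fun ξ₁ hξ₁ => middle ξ₁ hξ₁)]
  have hMc : Continuous fun ξ₁ : ℝ =>
      (P.eval x + P.eval ξ₁) * (Vp : ℝ[X]).eval (min ξ₁ x) + (Rp P).eval (min ξ₁ x) := by
    have hmin : Continuous fun ξ₁ : ℝ => min ξ₁ x := continuous_id.min continuous_const
    exact ((continuous_const.add hPc).mul ((Vp : ℝ[X]).continuous.comp hmin)).add
      ((Rp P).continuous.comp hmin)
  rw [← intervalIntegral.integral_add_adjacent_intervals (b := x)
    (hMc.intervalIntegrable 0 x) (hMc.intervalIntegrable x 1)]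
  -- left piece
  have eL : ∀ ξ₁ ∈ Set.uIcc (0:ℝ) x, ((P.eval x + P.eval ξ₁) * (Vp : ℝ[X]).eval (min ξ₁ x)
        + (Rp P).eval (min ξ₁ x))
      = ((C (P.eval x) + P) * Vp + Rp P).eval ξ₁ := by
    intro ξ₁ hξ₁
    rw [Set.uIcc_of_le hx.1] at hξ₁
    rw [min_eq_left hξ₁.2]
    simp only [eval_add, eval_mul, eval_C]
  have eR : ∀ ξ₁ ∈ Set.uIcc x 1, ((P.eval x + P.eval ξ₁) * (Vp : ℝ[X]).eval (min ξ₁ x)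
        + (Rp P).eval (min ξ₁ x))
      = ((C (P.eval x) + P) * C ((Vp : ℝ[X]).eval x) + C ((Rp P).eval x)).eval ξ₁ := by
    intro ξ₁ hξ₁
    rw [Set.uIcc_of_le hx.2] at hξ₁
    rw [min_eq_right hξ₁.1]
    simp only [eval_add, eval_mul, eval_C]
  rw [intervalIntegral.integral_congr eL, intervalIntegral.integral_congr eR, pftc, pftc,
    intP_eval_zero, sub_zero]
  -- now a purely polynomial computation
  have hG0 : intP ((C (P.eval x) + P) * Vp + Rp P : ℝ[X])
      = C (P.eval x) * intP Vp + intP (P * Vp + Rp P) := by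
    rw [show ((C (P.eval x) + P) * Vp + Rp P : ℝ[X])
        = C (P.eval x) * Vp + (P * Vp + Rp P) by ring,
      intP_add (C (P.eval x) * Vp) (P * Vp + Rp P), intP_C_mul]
  have hG1 : intP ((C (P.eval x) + P) * C ((Vp : ℝ[X]).eval x) + C ((Rp P).eval x) : ℝ[X])
      = C ((Vp : ℝ[X]).eval x) * (C (P.eval x) * X + intP P) + C ((Rp P).eval x) * X := by
    rw [show ((C (P.eval x) + P) * C ((Vp : ℝ[X]).eval x) + C ((Rp P).eval x) : ℝ[X])
        = C ((Vp : ℝ[X]).eval x) * (C (P.eval x) * 1 + P) + C ((Rp P).eval x) * 1 by ring,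
      intP_add, intP_C_mul, intP_add, intP_C_mul, intP_one, intP_C_mul, intP_one]
  rw [hG0, hG1, TT]
  simp only [eval_add, eval_mul, eval_sub, eval_C, eval_X, eval_one, Sv]
  ring

-- ### Transport along `ℚ →+* ℝ`

omit [CharZero K] in
lemma Sv_map {L : Type*} [Field L] (f : K →+* L) (p : K[X]) : Sv (p.map f) = f (Sv p) := by
  rw [Sv, Sv, ← intP_map, eval_one_map]

omit [CharZero K] in
lemma Vp_map {L : Type*} [Field L] (f : K →+* L) : (Vp : K[X]).map f = Vp := by
  rw [Vp, Vp, intP_map]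
  simp

omit [CharZero K] in
lemma Rp_map {L : Type*} [Field L] (f : K →+* L) (p : K[X]) :
    (Rp p).map f = Rp (p.map f) := by
  rw [Rp, Rp, intP_map]
  congr 1
  simp [Polynomial.map_add, Polynomial.map_sub, Polynomial.map_mul, Polynomial.map_one,
    Sv_map, intP_map]

omit [CharZero K] in
lemma TT_map {L : Type*} [Field L] (f : K →+* L) (p : K[X]) :
    (TT p).map f = TT (p.map f) := by
  simp only [TT, Polynomial.map_add, Polynomial.map_mul, Polynomial.map_sub,
    Polynomial.map_one, map_X, map_C, Sv_map, intP_map, Vp_map, Rp_map]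

end BS4

/-- In the four-species coefficient setup, the sequence $c_i = \alpha_{i+1,i}/(i+1)$
satisfies $c_1 = 1/4$, $c_2 = 1/6$, $c_3 = -1/12$ and the homogeneous recursion
$c_i = c_{i-1} - c_{i-2} + c_{i-3}/3$ for $i \ge 4$. -/
theorem bs4_c_sequence_recursion
    (q : ℕ → Polynomial ℚ)
    (hq1 : q 1 = X - X ^ 2 + C (1/3 : ℚ) * X ^ 3)
    (hrec : ∀ k, 1 ≤ k → ∀ x ∈ Set.Icc (0 : ℝ) 1,
      (Polynomial.aeval x) (q (k + 1)) =
        ∫ ξ₁ in (0:ℝ)..1, ∫ ξ₂ in (0:ℝ)..1, ∫ ξ₃ in (0:ℝ)..1,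
          if ξ₂ < min ξ₁ (min ξ₃ x) then
            (Polynomial.aeval x) (q k) + (Polynomial.aeval ξ₁) (q k)
              + (Polynomial.aeval ξ₂) (q k) + (Polynomial.aeval ξ₃) (q k)
          else 0)
    (c : ℕ → ℚ) (hc : ∀ i, c i = (q (i + 1)).coeff i / ((i : ℚ) + 1)) :
    c 1 = 1 / 4 ∧ c 2 = 1 / 6 ∧ c 3 = -(1 / 12)
    ∧ ∀ i, 4 ≤ i → c i = c (i - 1) - c (i - 2) + (1 / 3) * c (i - 3) := by
  set f : ℚ →+* ℝ := algebraMap ℚ ℝ with hf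
  have ha : ∀ (y : ℝ) (p : ℚ[X]), (Polynomial.aeval y) p = (p.map f).eval y := by
    intro y p
    rw [Polynomial.aeval_def, Polynomial.eval₂_eq_eval_map]
  -- the polynomial recursion
  have hstep : ∀ k, 1 ≤ k → q (k + 1) = TT (q k) := by
    intro k hk
    apply Polynomial.map_injective f f.injective
    rw [TT_map]
    apply Polynomial.eq_of_infinite_eval_eq
    refine Set.Infinite.mono ?_ (Set.Icc_infinite (show (0:ℝ) < 1 by norm_num))
    intro x hx
    have h1 := hrec k hk x hx
    simp only [ha] at h1
    exact h1.trans (triple_integral_eq ((q k).map f) x hx)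
  -- invariants
  have hSq1 : Sv (q 1) = 1/4 := by
    have hi : intP (X - X ^ 2 + C (1/3 : ℚ) * X ^ 3)
        = C (1/2 : ℚ) * X ^ 2 - C (1/3 : ℚ) * X ^ 3 + C (1/12 : ℚ) * X ^ 4 := by
      refine intP_uniq ?_ (by simp)
      rw [derivative_add, derivative_sub, derivative_C_mul, derivative_C_mul,
        derivative_C_mul, derivative_X_pow, derivative_X_pow, derivative_X_pow]
      norm_num [← mul_assoc, ← map_mul]
    rw [hq1, Sv, hi]
    simp
    norm_num
  have hS : ∀ k, 1 ≤ k → Sv (q k) = 1/4 := by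
    intro k hk
    induction k, hk using Nat.le_induction with
    | base => exact hSq1
    | succ k hk ih => rw [hstep k hk, Sv_TT, ih]
  have h0 : ∀ k, 1 ≤ k → (q k).coeff 0 = 0 := by
    intro k hk
    induction k, hk using Nat.le_induction with
    | base => simp [hq1]
    | succ k hk ih => rw [hstep k hk, coeff_TT_zero]
  have h1c : ∀ k, 2 ≤ k → (q k).coeff 1 = 1/2 := by
    intro k hk
    obtain ⟨j, rfl⟩ : ∃ j, k = j + 1 := ⟨k - 1, by omega⟩
    have hj : 1 ≤ j := by omega
    rw [hstep j hj, coeff_TT_one, h0 j hj, hS j hj]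
    norm_num
  have h2c : ∀ k, 3 ≤ k → (q k).coeff 2 = 1/2 := by
    intro k hk
    obtain ⟨j, rfl⟩ : ∃ j, k = j + 1 := ⟨k - 1, by omega⟩
    rw [hstep j (by omega), coeff_TT_two, h0 j (by omega), hS j (by omega),
      h1c j (by omega)]
    norm_num
  have h3c : ∀ k, 4 ≤ k → (q k).coeff 3 = -(1/3) := by
    intro k hk
    obtain ⟨j, rfl⟩ : ∃ j, k = j + 1 := ⟨k - 1, by omega⟩
    rw [hstep j (by omega), coeff_TT_three, h0 j (by omega), h1c j (by omega),
      h2c j (by omega)]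
    norm_num
  -- stabilization of coefficients
  have stb : ∀ k j, j + 1 ≤ k → (q k).coeff j = (q (j + 1)).coeff j := by
    intro k
    induction k using Nat.strong_induction_on with
    | _ k ih =>
      intro j hjk
      rcases j with _ | _ | _ | _ | m
      · rw [h0 k (by omega), h0 1 (by omega)]
      · rw [h1c k (by omega), h1c 2 (by omega)]
      · rw [h2c k (by omega), h2c 3 (by omega)]
      · rw [h3c k (by omega), h3c 4 (by omega)]
      · rcases eq_or_lt_of_le hjk with heq | hlt
        · rw [← heq]
        · obtain ⟨k', rfl⟩ : ∃ k', k = k' + 1 := ⟨k - 1, by omega⟩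
          have hk' : 1 ≤ k' := by omega
          rw [hstep k' hk', hstep (m + 4) (by omega), coeff_TT_ge4, coeff_TT_ge4,
            ih k' (by omega) (m + 3) (by omega), ih (m + 4) (by omega) (m + 3) (by omega),
            ih k' (by omega) (m + 2) (by omega), ih (m + 4) (by omega) (m + 2) (by omega),
            ih k' (by omega) (m + 1) (by omega), ih (m + 4) (by omega) (m + 1) (by omega)]
  refine ⟨?_, ?_, ?_, ?_⟩
  · rw [hc 1, show (1 : ℕ) + 1 = 2 from rfl, h1c 2 le_rfl]
    norm_num
  · rw [hc 2, show (2 : ℕ) + 1 = 3 from rfl, h2c 3 le_rfl]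
    norm_num
  · rw [hc 3, show (3 : ℕ) + 1 = 4 from rfl, h3c 4 le_rfl]
    norm_num
  · intro i hi
    obtain ⟨m, rfl⟩ : ∃ m, i = m + 4 := ⟨i - 4, by omega⟩
    rw [show m + 4 - 1 = m + 3 from rfl, show m + 4 - 2 = m + 2 from rfl,
      show m + 4 - 3 = m + 1 from rfl, hc (m + 4), hc (m + 3), hc (m + 2), hc (m + 1),
      hstep (m + 4) (by omega), coeff_TT_ge4,
      stb (m + 4) (m + 2) (by omega), stb (m + 4) (m + 1) (by omega),
      show m + 3 + 1 = m + 4 from rfl, show m + 2 + 1 = m + 3 from rfl,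
      show m + 1 + 1 = m + 2 from rfl]
    have h1 : ((m : ℚ) + 1) ≠ 0 := by positivity
    have h2 : ((m : ℚ) + 2) ≠ 0 := by positivity
    have h3 : ((m : ℚ) + 3) ≠ 0 := by positivity
    have h4 : ((m : ℚ) + 4) ≠ 0 := by positivity
    have h5 : ((m : ℚ) + 5) ≠ 0 := by positivity
    push_cast
    field_simp
    ring
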